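/- There exists a constant C > 0 such that for every n ≥ 1 and every word A^(n) = (A₁,…,A_n) ∈ 𝒜ⁿ, sup_{x∈[0,1]} |h_{A^(n)}'(x)| ≤ C · inf_{x∈[0,1]} |h_{A^(n)}'(x)|. -/

import Mathlib

open MeasureTheory Real Set Filter Topology

namespace SCF

/-- The involution `ι(x) = (1−x)/(1+x)`. -/
noncomputable def iota (x : ℝ) : ℝ := (1 - x) / (1 + x)

/-- Even continued-fraction step.  For `y ∈ (0,1/2]` one has
`⌊(1/y+1)/2⌋ = k` whenever `1/y ∈ (2k−1, 2k+1)`, so `Te y = |1/y − 2k|`;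
explicitly `Te y = 1/y − 2` on `[1/3,1/2]`, `Te y = 1/y − 2k` on
`[1/(2k+1), 1/(2k))` and `Te y = 2k − 1/y` on `[1/(2k), 1/(2k−1))` (`k ≥ 2`). -/
noncomputable def Te (y : ℝ) : ℝ := |1 / y - 2 * (⌊(1 / y + 1) / 2⌋ : ℝ)|

/-- The spliced continued fraction (SCF) map `T : [0,1] → [0,1]`, with
`T 0 = 0`, `T 1 = 1`.  On `(0,1/2]` it is the even continued fraction map
(see `Te`), and on `(1/2,1)` it is the odd–odd map, which is the conjugate
`ι ∘ Te ∘ ι` of the even map; this agrees with the branchwise definition: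
`T x = (k x − (k−1))/(k − (k+1) x)` on `((k−1)/k, (2k−1)/(2k+1)]` and
`T x = (k − (k+1) x)/(k x − (k−1))` on `((2k−1)/(2k+1), k/(k+1)]` for `k ≥ 2`. -/
noncomputable def T (x : ℝ) : ℝ :=
  if x ≤ 0 then 0
  else if 1 ≤ x then 1
  else if x ≤ 1 / 2 then Te x
  else iota (Te (iota x))

/-- Parity label of a digit: `e` (even cusp) or `o` (odd–odd cusp). -/
inductive Par | e | o
deriving DecidableEq

/-- A candidate SCF digit `(a, ε)_s`. -/
structure Digit where
  a : ℤ
  eps : ℤ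
  s : Par
deriving DecidableEq

/-- The digit set `𝒜 = {(k,ε)_s : k ≥ 2, ε = ±1, s ∈ {e,o}} ∪ {(1,+1)_e}`. -/
def Digit.Valid (d : Digit) : Prop :=
  (2 ≤ d.a ∧ (d.eps = 1 ∨ d.eps = -1)) ∨ (d.a = 1 ∧ d.eps = 1 ∧ d.s = Par.e)

/-- The branch intervals `I_{(a,ε)_s}` of the SCF map. -/
noncomputable def branch (d : Digit) : Set ℝ :=
  match d.s with
  | Par.e =>
      if d.a = 1 then Set.Icc (1/3 : ℝ) (1/2)
      else if d.eps = 1 then Set.Ico (1 / (2 * (d.a : ℝ) + 1)) (1 / (2 * (d.a : ℝ)))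
      else Set.Ico (1 / (2 * (d.a : ℝ))) (1 / (2 * (d.a : ℝ) - 1))
  | Par.o =>
      if d.eps = 1 then
        Set.Ioc ((2 * (d.a : ℝ) - 1) / (2 * (d.a : ℝ) + 1)) ((d.a : ℝ) / ((d.a : ℝ) + 1))
      else
        Set.Ioc (((d.a : ℝ) - 1) / (d.a : ℝ)) ((2 * (d.a : ℝ) - 1) / (2 * (d.a : ℝ) + 1))

open Classical in
/-- The SCF digit of a point `y` (the unique valid digit `d` with `y ∈ I_d`;
well defined for every `y ∈ (0,1)`). -/
noncomputable def digit (y : ℝ) : Digit :=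
  if h : ∃ d : Digit, d.Valid ∧ y ∈ branch d then h.choose else ⟨1, 1, Par.e⟩

/-- The `n`-th SCF digit `(a_n(x), ε_n(x))_{s_n(x)}` of `x`, `n ≥ 1`,
determined by `T^[n−1] x ∈ I_{(a_n,ε_n)_{s_n}}`. -/
noncomputable def dig (n : ℕ) (x : ℝ) : Digit := digit (T^[n - 1] x)

/-- The `n`-th SCF partial quotient `a_n(x)`. -/
noncomputable def a (n : ℕ) (x : ℝ) : ℤ := (dig n x).a

/-- The invariant density `f_μ`. -/
noncomputable def fdens (x : ℝ) : ℝ :=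
  2 / (Real.log (2 + Real.sqrt 3) * (1 - (2 - Real.sqrt 3) * x) * (1 + Real.sqrt 3 * x))

/-- The absolutely continuous `T`-invariant probability measure `μ` on `(0,1)`. -/
noncomputable def mu : Measure ℝ :=
  (volume.restrict (Set.Ioo (0 : ℝ) 1)).withDensity fun x => ENNReal.ofReal (fdens x)

/-- The inverse branches `h_{(a,ε)_s}` of the SCF map `T`. -/
noncomputable def h (d : Digit) (x : ℝ) : ℝ :=
  match d.s with
  | Par.e => 1 / (2 * (d.a : ℝ) + (d.eps : ℝ) * x)
  | Par.o =>
      if d.eps = 1 then (((d.a : ℝ) - 1) * x + (d.a : ℝ)) / ((d.a : ℝ) * x + ((d.a : ℝ) + 1))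
      else ((d.a : ℝ) * x + ((d.a : ℝ) - 1)) / (((d.a : ℝ) + 1) * x + (d.a : ℝ))

/-- Composed inverse branch `h_{A^{(n)}} = h_{A₁} ∘ ⋯ ∘ h_{A_n}` of a word. -/
noncomputable def hWord (l : List Digit) : ℝ → ℝ :=
  l.foldr (fun d g => h d ∘ g) id

/-- The dual inverse branches `bar h_{(b,η)_t}`. -/
noncomputable def hbar (d : Digit) (y : ℝ) : ℝ :=
  match d.s with
  | Par.e => (d.eps : ℝ) / (2 * (d.a : ℝ) + y)
  | Par.o =>
      1 / (1 + (d.eps : ℝ) / (((d.a : ℝ) - ((max 0 d.eps : ℤ) : ℝ)) + 1 / (1 + y)))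

/-- The matrix `M_{(a,ε)_s}` associated with the inverse branch `h_{(a,ε)_s}`. -/
noncomputable def Mdig (d : Digit) : Matrix (Fin 2) (Fin 2) ℝ :=
  match d.s with
  | Par.e => !![0, 1; (d.eps : ℝ), 2 * (d.a : ℝ)]
  | Par.o =>
      !![(d.a : ℝ) - ((max 0 d.eps : ℤ) : ℝ), (d.a : ℝ) - ((max 0 d.eps : ℤ) : ℝ) + (d.eps : ℝ);
         (d.a : ℝ) - ((max 0 d.eps : ℤ) : ℝ) + 1, (d.a : ℝ) - ((max 0 d.eps : ℤ) : ℝ) + (d.eps : ℝ) + 1]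

/-- `M_n(x) = M_{(a₁,ε₁)_{s₁}} ⋯ M_{(a_n,ε_n)_{s_n}}`. -/
noncomputable def Mn (n : ℕ) (x : ℝ) : Matrix (Fin 2) (Fin 2) ℝ :=
  ((List.range n).map fun i => Mdig (digit (T^[i] x))).prod

/-- `P_n(x)`: the `(1,2)`-entry of `M_n(x)` (numerator of the `n`-th convergent). -/
noncomputable def Pc (n : ℕ) (x : ℝ) : ℝ := Mn n x 0 1

/-- `Q_n(x)`: the `(2,2)`-entry of `M_n(x)` (denominator of the `n`-th convergent). -/
noncomputable def Qc (n : ℕ) (x : ℝ) : ℝ := Mn n x 1 1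



lemma valid_facts {d : Digit} (hd : d.Valid) :
    (d.eps = 1 ∨ d.eps = -1) ∧ 1 ≤ d.a ∧ (d.eps = -1 → 2 ≤ d.a) ∧ (d.s = Par.o → 2 ≤ d.a) := by
  rcases hd with ⟨ha, he⟩ | ⟨ha, he, hs⟩
  · exact ⟨he, by omega, fun _ => ha, fun _ => ha⟩
  · refine ⟨Or.inl he, by omega, fun h => by omega, fun h => ?_⟩
    rw [hs] at h; cases h

lemma h_maps {d : Digit} (hd : d.Valid) {x : ℝ} (hx : x ∈ Set.Icc (0:ℝ) 1) :
    h d x ∈ Set.Icc (0:ℝ) 1 := by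
  obtain ⟨heps, ha1, hae, hao⟩ := valid_facts hd
  obtain ⟨hx0, hx1⟩ := hx
  obtain ⟨a, eps, s⟩ := d
  simp only at heps ha1 hae hao
  have ha1' : (1:ℝ) ≤ (a:ℝ) := by exact_mod_cast ha1
  cases s with
  | e =>
    have hden : (1:ℝ) ≤ 2 * (a:ℝ) + (eps:ℝ) * x := by
      rcases heps with he | he <;> subst he <;> push_cast <;> nlinarith
    show 1 / (2 * (a:ℝ) + (eps:ℝ) * x) ∈ Set.Icc (0:ℝ) 1
    constructor
    · positivity
    · rw [div_le_one (by linarith)]; linarith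
  | o =>
    have ha2 : (2:ℝ) ≤ (a:ℝ) := by exact_mod_cast hao rfl
    rcases heps with he | he <;> subst he
    · show (if (1:ℤ) = 1 then (((a:ℝ) - 1) * x + (a:ℝ)) / ((a:ℝ) * x + ((a:ℝ) + 1))
        else ((a:ℝ) * x + ((a:ℝ) - 1)) / (((a:ℝ) + 1) * x + (a:ℝ))) ∈ Set.Icc (0:ℝ) 1
      rw [if_pos rfl]
      constructor
      · apply div_nonneg <;> nlinarith
      · rw [div_le_one (by nlinarith)]; nlinarith
    · show (if (-1:ℤ) = 1 then (((a:ℝ) - 1) * x + (a:ℝ)) / ((a:ℝ) * x + ((a:ℝ) + 1))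
        else ((a:ℝ) * x + ((a:ℝ) - 1)) / (((a:ℝ) + 1) * x + (a:ℝ))) ∈ Set.Icc (0:ℝ) 1
      rw [if_neg (by decide)]
      constructor
      · apply div_nonneg <;> nlinarith
      · rw [div_le_one (by nlinarith)]; nlinarith

lemma h_lipschitz {d : Digit} (hd : d.Valid) {x y : ℝ} (hx : x ∈ Set.Icc (0:ℝ) 1)
    (hy : y ∈ Set.Icc (0:ℝ) 1) :
    |h d x - h d y| ≤ (1/4) * |x - y| := by
  obtain ⟨heps, ha1, hae, hao⟩ := valid_facts hd
  obtain ⟨hx0, hx1⟩ := hx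
  obtain ⟨hy0, hy1⟩ := hy
  obtain ⟨a, eps, s⟩ := d
  simp only at heps ha1 hae hao
  have ha1' : (1:ℝ) ≤ (a:ℝ) := by exact_mod_cast ha1
  have habs : 0 ≤ |x - y| ∧ x - y ≤ |x - y| ∧ y - x ≤ |x - y| :=
    ⟨abs_nonneg _, le_abs_self _, by rw [abs_sub_comm]; exact le_abs_self _⟩
  obtain ⟨ht0, ht1, ht2⟩ := habs
  cases s with
  | e =>
    have hdx : (1:ℝ) ≤ 2 * (a:ℝ) + (eps:ℝ) * x := by
      rcases heps with he | he <;> subst he <;> push_cast <;> nlinarith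
    have hdy : (1:ℝ) ≤ 2 * (a:ℝ) + (eps:ℝ) * y := by
      rcases heps with he | he <;> subst he <;> push_cast <;> nlinarith
    have hdx2 : (2:ℝ) ≤ 2 * (a:ℝ) + (eps:ℝ) * x := by
      rcases heps with he | he <;> subst he <;> push_cast
      · nlinarith
      · have : (2:ℝ) ≤ (a:ℝ) := by exact_mod_cast hae rfl
        nlinarith
    have hdy2 : (2:ℝ) ≤ 2 * (a:ℝ) + (eps:ℝ) * y := by
      rcases heps with he | he <;> subst he <;> push_cast
      · nlinarith
      · have : (2:ℝ) ≤ (a:ℝ) := by exact_mod_cast hae rfl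
        nlinarith
    have key : h ⟨a, eps, Par.e⟩ x - h ⟨a, eps, Par.e⟩ y =
        (eps:ℝ) * (y - x) / ((2 * (a:ℝ) + (eps:ℝ) * x) * (2 * (a:ℝ) + (eps:ℝ) * y)) := by
      show 1 / (2 * (a:ℝ) + (eps:ℝ) * x) - 1 / (2 * (a:ℝ) + (eps:ℝ) * y) = _
      field_simp
      ring
    rw [key, abs_div, abs_mul]
    have he1 : |(eps:ℝ)| = 1 := by rcases heps with he | he <;> subst he <;> simp
    rw [he1, one_mul, abs_sub_comm y x,
      abs_of_pos (by nlinarith : (0:ℝ) < (2 * (a:ℝ) + (eps:ℝ) * x) * (2 * (a:ℝ) + (eps:ℝ) * y))]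
    rw [div_le_iff₀ (by nlinarith)]
    nlinarith [mul_nonneg ht0 (by nlinarith :
      (0:ℝ) ≤ (2 * (a:ℝ) + (eps:ℝ) * x) * (2 * (a:ℝ) + (eps:ℝ) * y) - 4)]
  | o =>
    have ha2 : (2:ℝ) ≤ (a:ℝ) := by exact_mod_cast hao rfl
    rcases heps with he | he <;> subst he
    · have hdx : (3:ℝ) ≤ (a:ℝ) * x + ((a:ℝ) + 1) := by nlinarith
      have hdy : (3:ℝ) ≤ (a:ℝ) * y + ((a:ℝ) + 1) := by nlinarith
      have key : h ⟨a, 1, Par.o⟩ x - h ⟨a, 1, Par.o⟩ y =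
          (y - x) / (((a:ℝ) * x + ((a:ℝ) + 1)) * ((a:ℝ) * y + ((a:ℝ) + 1))) := by
        show (if (1:ℤ) = 1 then (((a:ℝ) - 1) * x + (a:ℝ)) / ((a:ℝ) * x + ((a:ℝ) + 1))
          else ((a:ℝ) * x + ((a:ℝ) - 1)) / (((a:ℝ) + 1) * x + (a:ℝ))) -
          (if (1:ℤ) = 1 then (((a:ℝ) - 1) * y + (a:ℝ)) / ((a:ℝ) * y + ((a:ℝ) + 1))
          else ((a:ℝ) * y + ((a:ℝ) - 1)) / (((a:ℝ) + 1) * y + (a:ℝ))) = _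
        rw [if_pos rfl, if_pos rfl]
        field_simp
        ring
      rw [key, abs_div, abs_sub_comm y x,
        abs_of_pos (by nlinarith : (0:ℝ) < ((a:ℝ) * x + ((a:ℝ) + 1)) * ((a:ℝ) * y + ((a:ℝ) + 1)))]
      rw [div_le_iff₀ (by nlinarith)]
      nlinarith [mul_nonneg ht0 (by nlinarith :
        (0:ℝ) ≤ ((a:ℝ) * x + ((a:ℝ) + 1)) * ((a:ℝ) * y + ((a:ℝ) + 1)) - 4)]
    · have hdx : (2:ℝ) ≤ ((a:ℝ) + 1) * x + (a:ℝ) := by nlinarith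
      have hdy : (2:ℝ) ≤ ((a:ℝ) + 1) * y + (a:ℝ) := by nlinarith
      have key : h ⟨a, -1, Par.o⟩ x - h ⟨a, -1, Par.o⟩ y =
          (x - y) / ((((a:ℝ) + 1) * x + (a:ℝ)) * (((a:ℝ) + 1) * y + (a:ℝ))) := by
        show (if (-1:ℤ) = 1 then (((a:ℝ) - 1) * x + (a:ℝ)) / ((a:ℝ) * x + ((a:ℝ) + 1))
          else ((a:ℝ) * x + ((a:ℝ) - 1)) / (((a:ℝ) + 1) * x + (a:ℝ))) -
          (if (-1:ℤ) = 1 then (((a:ℝ) - 1) * y + (a:ℝ)) / ((a:ℝ) * y + ((a:ℝ) + 1))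
          else ((a:ℝ) * y + ((a:ℝ) - 1)) / (((a:ℝ) + 1) * y + (a:ℝ))) = _
        rw [if_neg (by decide), if_neg (by decide)]
        field_simp
        ring
      rw [key, abs_div,
        abs_of_pos (by nlinarith : (0:ℝ) < (((a:ℝ) + 1) * x + (a:ℝ)) * (((a:ℝ) + 1) * y + (a:ℝ)))]
      rw [div_le_iff₀ (by nlinarith)]
      nlinarith [mul_nonneg ht0 (by nlinarith :
        (0:ℝ) ≤ (((a:ℝ) + 1) * x + (a:ℝ)) * (((a:ℝ) + 1) * y + (a:ℝ)) - 4)]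


lemma h_deriv_pair {d : Digit} (hd : d.Valid) {u v : ℝ} (hu : u ∈ Set.Icc (0:ℝ) 1)
    (hv : v ∈ Set.Icc (0:ℝ) 1) :
    ∃ Du Dv : ℝ, HasDerivAt (h d) Du u ∧ HasDerivAt (h d) Dv v ∧
      |Du| ≤ (1 + (3/2) * |u - v|)^2 * |Dv| := by
  obtain ⟨heps, ha1, hae, hao⟩ := valid_facts hd
  obtain ⟨hu0, hu1⟩ := hu
  obtain ⟨hv0, hv1⟩ := hv
  obtain ⟨a, eps, s⟩ := d
  simp only at heps ha1 hae hao
  have ha1' : (1:ℝ) ≤ (a:ℝ) := by exact_mod_cast ha1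
  have ht0 : (0:ℝ) ≤ |u - v| := abs_nonneg _
  have ht1 : u - v ≤ |u - v| := le_abs_self _
  have ht2 : v - u ≤ |u - v| := by rw [abs_sub_comm]; exact le_abs_self _
  cases s with
  | e =>
    have hdu : (1:ℝ) ≤ 2 * (a:ℝ) + (eps:ℝ) * u := by
      rcases heps with he | he <;> subst he <;> push_cast <;> nlinarith
    have hdv : (1:ℝ) ≤ 2 * (a:ℝ) + (eps:ℝ) * v := by
      rcases heps with he | he <;> subst he <;> push_cast <;> nlinarith
    have hder : ∀ w : ℝ, 0 < 2 * (a:ℝ) + (eps:ℝ) * w →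
        HasDerivAt (h ⟨a, eps, Par.e⟩) (-(eps:ℝ) / (2 * (a:ℝ) + (eps:ℝ) * w)^2) w := by
      intro w hw
      have h1 : HasDerivAt (fun t : ℝ => 2 * (a:ℝ) + (eps:ℝ) * t) ((eps:ℝ)) w := by
        simpa using ((hasDerivAt_id w).const_mul ((eps:ℝ))).const_add (2 * (a:ℝ))
      have h2 := (hasDerivAt_const w (1:ℝ)).div h1 (ne_of_gt hw)
      have hfe : h ⟨a, eps, Par.e⟩ = fun t : ℝ => 1 / (2 * (a:ℝ) + (eps:ℝ) * t) := rfl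
      rw [hfe]
      refine h2.congr_deriv ?_
      field_simp
      ring
    refine ⟨_, _, hder u (by linarith), hder v (by linarith), ?_⟩
    have he1 : |(eps:ℝ)| = 1 := by rcases heps with he | he <;> subst he <;> simp
    rw [abs_div, abs_div, abs_neg, he1,
      abs_of_pos (by positivity : (0:ℝ) < (2 * (a:ℝ) + (eps:ℝ) * u)^2),
      abs_of_pos (by positivity : (0:ℝ) < (2 * (a:ℝ) + (eps:ℝ) * v)^2)]
    rw [mul_one_div, div_le_div_iff₀ (by positivity) (by positivity)]
    have hdvle : 2 * (a:ℝ) + (eps:ℝ) * v ≤ (1 + (3/2) * |u - v|) * (2 * (a:ℝ) + (eps:ℝ) * u) := by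
      rcases heps with he | he <;> subst he <;> push_cast <;> nlinarith
    nlinarith [sq_nonneg (2 * (a:ℝ) + (eps:ℝ) * v), mul_le_mul hdvle hdvle (by linarith) (by positivity)]
  | o =>
    have ha2 : (2:ℝ) ≤ (a:ℝ) := by exact_mod_cast hao rfl
    rcases heps with he | he <;> subst he
    · have hdu : (3:ℝ) ≤ (a:ℝ) * u + ((a:ℝ) + 1) := by nlinarith
      have hdv : (3:ℝ) ≤ (a:ℝ) * v + ((a:ℝ) + 1) := by nlinarith
      have hder : ∀ w : ℝ, 0 < (a:ℝ) * w + ((a:ℝ) + 1) →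
          HasDerivAt (h ⟨a, 1, Par.o⟩) (-1 / ((a:ℝ) * w + ((a:ℝ) + 1))^2) w := by
        intro w hw
        have h1 : HasDerivAt (fun t : ℝ => ((a:ℝ) - 1) * t + (a:ℝ)) ((a:ℝ) - 1) w := by
          simpa using ((hasDerivAt_id w).const_mul ((a:ℝ) - 1)).add_const (a:ℝ)
        have h2 : HasDerivAt (fun t : ℝ => (a:ℝ) * t + ((a:ℝ) + 1)) ((a:ℝ)) w := by
          simpa using ((hasDerivAt_id w).const_mul ((a:ℝ))).add_const ((a:ℝ) + 1)
        have h3 := h1.div h2 (ne_of_gt hw)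
        have hfe : h ⟨a, (1:ℤ), Par.o⟩ =
            fun t : ℝ => (((a:ℝ) - 1) * t + (a:ℝ)) / ((a:ℝ) * t + ((a:ℝ) + 1)) := by
          funext t
          show (if (1:ℤ) = 1 then (((a:ℝ) - 1) * t + (a:ℝ)) / ((a:ℝ) * t + ((a:ℝ) + 1))
            else ((a:ℝ) * t + ((a:ℝ) - 1)) / (((a:ℝ) + 1) * t + (a:ℝ))) = _
          rw [if_pos rfl]
        rw [hfe]
        refine h3.congr_deriv ?_
        rw [div_eq_div_iff (by positivity) (by positivity)]
        ring
      refine ⟨_, _, hder u (by linarith), hder v (by linarith), ?_⟩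
      rw [abs_div, abs_div,
        abs_of_pos (by positivity : (0:ℝ) < ((a:ℝ) * u + ((a:ℝ) + 1))^2),
        abs_of_pos (by positivity : (0:ℝ) < ((a:ℝ) * v + ((a:ℝ) + 1))^2)]
      norm_num
      rw [inv_eq_one_div, inv_eq_one_div, mul_one_div, div_le_div_iff₀ (by positivity) (by positivity)]
      have hdvle : (a:ℝ) * v + ((a:ℝ) + 1) ≤
          (1 + (3/2) * |u - v|) * ((a:ℝ) * u + ((a:ℝ) + 1)) := by
        nlinarith [mul_le_mul_of_nonneg_left ht2 (by linarith : (0:ℝ) ≤ (a:ℝ)),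
          mul_nonneg ht0 (mul_nonneg (by linarith : (0:ℝ) ≤ (a:ℝ)) hu0),
          mul_nonneg ht0 (by linarith : (0:ℝ) ≤ (a:ℝ))]
      nlinarith [mul_le_mul hdvle hdvle (by linarith) (by positivity)]
    · have hdu : (2:ℝ) ≤ ((a:ℝ) + 1) * u + (a:ℝ) := by nlinarith
      have hdv : (2:ℝ) ≤ ((a:ℝ) + 1) * v + (a:ℝ) := by nlinarith
      have hder : ∀ w : ℝ, 0 < ((a:ℝ) + 1) * w + (a:ℝ) →
          HasDerivAt (h ⟨a, -1, Par.o⟩) (1 / (((a:ℝ) + 1) * w + (a:ℝ))^2) w := by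
        intro w hw
        have h1 : HasDerivAt (fun t : ℝ => (a:ℝ) * t + ((a:ℝ) - 1)) ((a:ℝ)) w := by
          simpa using ((hasDerivAt_id w).const_mul ((a:ℝ))).add_const ((a:ℝ) - 1)
        have h2 : HasDerivAt (fun t : ℝ => ((a:ℝ) + 1) * t + (a:ℝ)) ((a:ℝ) + 1) w := by
          simpa using ((hasDerivAt_id w).const_mul ((a:ℝ) + 1)).add_const ((a:ℝ))
        have h3 := h1.div h2 (ne_of_gt hw)
        have hfe : h ⟨a, (-1:ℤ), Par.o⟩ =
            fun t : ℝ => ((a:ℝ) * t + ((a:ℝ) - 1)) / (((a:ℝ) + 1) * t + (a:ℝ)) := by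
          funext t
          show (if (-1:ℤ) = 1 then (((a:ℝ) - 1) * t + (a:ℝ)) / ((a:ℝ) * t + ((a:ℝ) + 1))
            else ((a:ℝ) * t + ((a:ℝ) - 1)) / (((a:ℝ) + 1) * t + (a:ℝ))) = _
          rw [if_neg (by decide)]
        rw [hfe]
        refine h3.congr_deriv ?_
        rw [div_eq_div_iff (by positivity) (by positivity)]
        ring
      refine ⟨_, _, hder u (by linarith), hder v (by linarith), ?_⟩
      rw [abs_div, abs_div,
        abs_of_pos (by positivity : (0:ℝ) < (((a:ℝ) + 1) * u + (a:ℝ))^2),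
        abs_of_pos (by positivity : (0:ℝ) < (((a:ℝ) + 1) * v + (a:ℝ))^2)]
      norm_num
      rw [inv_eq_one_div, inv_eq_one_div, mul_one_div, div_le_div_iff₀ (by positivity) (by positivity)]
      have hdvle : ((a:ℝ) + 1) * v + (a:ℝ) ≤
          (1 + (3/2) * |u - v|) * (((a:ℝ) + 1) * u + (a:ℝ)) := by
        nlinarith [mul_le_mul_of_nonneg_left ht2 (by linarith : (0:ℝ) ≤ (a:ℝ) + 1),
          mul_nonneg ht0 (mul_nonneg (by linarith : (0:ℝ) ≤ (a:ℝ) + 1) hu0),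
          mul_nonneg ht0 (by linarith : (0:ℝ) ≤ (a:ℝ) - 2),
          mul_nonneg ht0 (by linarith : (0:ℝ) ≤ (a:ℝ))]
      nlinarith [mul_le_mul hdvle hdvle (by linarith) (by positivity)]


lemma hWord_main (l : List Digit) (hv : ∀ d ∈ l, d.Valid) :
    (∀ x ∈ Set.Icc (0:ℝ) 1, hWord l x ∈ Set.Icc (0:ℝ) 1) ∧
    (∀ x ∈ Set.Icc (0:ℝ) 1, ∀ y ∈ Set.Icc (0:ℝ) 1,
      |hWord l x - hWord l y| ≤ (1/4:ℝ)^l.length * |x - y|) ∧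
    (∀ x ∈ Set.Icc (0:ℝ) 1, ∀ y ∈ Set.Icc (0:ℝ) 1,
      ∃ Dx Dy : ℝ, HasDerivAt (hWord l) Dx x ∧ HasDerivAt (hWord l) Dy y ∧
        |Dx| ≤ Real.exp (4 * (1 - (1/4:ℝ)^l.length)) * |Dy|) := by
  induction l with
  | nil =>
    refine ⟨fun x hx => hx, by simp [hWord], fun x _ y _ => ⟨1, 1, hasDerivAt_id x, hasDerivAt_id y, by simp [hWord]⟩⟩
  | cons d t ih =>
    obtain ⟨ihm, ihl, ihd⟩ := ih (fun e he => hv e (List.mem_cons_of_mem _ he))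
    have hdv : d.Valid := hv d (List.mem_cons_self)
    refine ⟨?_, ?_, ?_⟩
    · intro x hx
      exact h_maps hdv (ihm x hx)
    · intro x hx y hy
      have hlip := h_lipschitz hdv (ihm x hx) (ihm y hy)
      have h14 : (0:ℝ) ≤ (1/4:ℝ) := by norm_num
      calc |hWord (d :: t) x - hWord (d :: t) y|
          = |h d (hWord t x) - h d (hWord t y)| := rfl
        _ ≤ (1/4) * |hWord t x - hWord t y| := hlip
        _ ≤ (1/4) * ((1/4)^t.length * |x - y|) :=
            mul_le_mul_of_nonneg_left (ihl x hx y hy) h14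
        _ = (1/4:ℝ)^(d :: t).length * |x - y| := by
            simp [List.length_cons, pow_succ]; ring
    · intro x hx y hy
      obtain ⟨Dx, Dy, hDx, hDy, hrat⟩ := ihd x hx y hy
      obtain ⟨Du, Dv, hDu, hDv, hrat2⟩ := h_deriv_pair hdv (ihm x hx) (ihm y hy)
      refine ⟨Du * Dx, Dv * Dy, hDu.comp x hDx, hDv.comp y hDy, ?_⟩
      have huv : |hWord t x - hWord t y| ≤ (1/4:ℝ)^t.length := by
        have h1 := ihl x hx y hy
        have h2 : |x - y| ≤ 1 := by
          obtain ⟨hx0, hx1⟩ := hx; obtain ⟨hy0, hy1⟩ := hy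
          rw [abs_le]; constructor <;> linarith
        calc |hWord t x - hWord t y| ≤ (1/4:ℝ)^t.length * |x - y| := h1
          _ ≤ (1/4:ℝ)^t.length * 1 := mul_le_mul_of_nonneg_left h2 (by positivity)
          _ = (1/4:ℝ)^t.length := mul_one _
      have hKbound : (1 + (3/2) * |hWord t x - hWord t y|)^2 ≤
          Real.exp (3 * (1/4:ℝ)^t.length) := by
        have h1 : 1 + (3/2) * |hWord t x - hWord t y| ≤
            Real.exp ((3/2) * (1/4:ℝ)^t.length) := by
          have h2 : (3/2) * |hWord t x - hWord t y| ≤ (3/2) * (1/4:ℝ)^t.length :=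
            mul_le_mul_of_nonneg_left huv (by norm_num)
          linarith [Real.add_one_le_exp ((3/2) * (1/4:ℝ)^t.length)]
        calc (1 + (3/2) * |hWord t x - hWord t y|)^2
            ≤ (Real.exp ((3/2) * (1/4:ℝ)^t.length))^2 :=
              pow_le_pow_left₀ (by positivity) h1 2
          _ = Real.exp (3 * (1/4:ℝ)^t.length) := by
              rw [sq, ← Real.exp_add]; ring_nf
      have hE : Real.exp (4 * (1 - (1/4:ℝ)^(d :: t).length)) =
          Real.exp (3 * (1/4:ℝ)^t.length) * Real.exp (4 * (1 - (1/4:ℝ)^t.length)) := by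
        rw [← Real.exp_add]
        congr 1
        simp only [List.length_cons, pow_succ]
        ring
      rw [abs_mul, abs_mul, hE]
      calc |Du| * |Dx|
          ≤ ((1 + (3/2) * |hWord t x - hWord t y|)^2 * |Dv|) *
            (Real.exp (4 * (1 - (1/4:ℝ)^t.length)) * |Dy|) :=
            mul_le_mul hrat2 hrat (abs_nonneg _) (by positivity)
        _ ≤ (Real.exp (3 * (1/4:ℝ)^t.length) * |Dv|) *
            (Real.exp (4 * (1 - (1/4:ℝ)^t.length)) * |Dy|) := by
            have := mul_le_mul_of_nonneg_right hKbound (abs_nonneg Dv)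
            exact mul_le_mul_of_nonneg_right this (by positivity)
        _ = Real.exp (3 * (1/4:ℝ)^t.length) * Real.exp (4 * (1 - (1/4:ℝ)^t.length)) *
            (|Dv| * |Dy|) := by ring

/-- uniform comparability of `|h_{A^{(n)}}'|` over `[0,1]`:
`sup |h'| ≤ C · inf |h'|`, uniformly in the word. -/
theorem sup_le_const_mul_inf :
    ∃ C : ℝ, 0 < C ∧ ∀ l : List Digit, l ≠ [] → (∀ d ∈ l, d.Valid) →
      sSup ((fun x => |deriv (hWord l) x|) '' Set.Icc (0 : ℝ) 1) ≤
        C * sInf ((fun x => |deriv (hWord l) x|) '' Set.Icc (0 : ℝ) 1) := by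
  refine ⟨Real.exp 4, Real.exp_pos 4, ?_⟩
  intro l _ hval
  obtain ⟨ihm, ihl, ihd⟩ := hWord_main l hval
  set S := (fun x => |deriv (hWord l) x|) '' Set.Icc (0:ℝ) 1 with hS
  have hSne : S.Nonempty := ⟨|deriv (hWord l) 0|, ⟨0, by norm_num, rfl⟩⟩
  have hC : Real.exp (4 * (1 - (1/4:ℝ)^l.length)) ≤ Real.exp 4 := by
    apply Real.exp_le_exp.mpr
    nlinarith [pow_nonneg (by norm_num : (0:ℝ) ≤ 1/4) l.length]
  have key : ∀ x ∈ Set.Icc (0:ℝ) 1, ∀ y ∈ Set.Icc (0:ℝ) 1,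
      |deriv (hWord l) x| ≤ Real.exp 4 * |deriv (hWord l) y| := by
    intro x hx y hy
    obtain ⟨Dx, Dy, hDx, hDy, hr⟩ := ihd x hx y hy
    rw [hDx.deriv, hDy.deriv]
    exact le_trans hr (mul_le_mul_of_nonneg_right hC (abs_nonneg _))
  have hinf0 : 0 ≤ sInf S := by
    apply le_csInf hSne
    rintro b ⟨y, hy, rfl⟩
    exact abs_nonneg _
  have hinf : ∀ x ∈ Set.Icc (0:ℝ) 1, |deriv (hWord l) x| ≤ Real.exp 4 * sInf S := by
    intro x hx
    have h1 : |deriv (hWord l) x| / Real.exp 4 ≤ sInf S := by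
      apply le_csInf hSne
      rintro b ⟨y, hy, rfl⟩
      rw [div_le_iff₀ (Real.exp_pos 4)]
      have := key x hx y hy
      linarith
    have h2 := mul_le_mul_of_nonneg_left h1 (Real.exp_pos 4).le
    calc |deriv (hWord l) x| = Real.exp 4 * (|deriv (hWord l) x| / Real.exp 4) := by
          field_simp
      _ ≤ Real.exp 4 * sInf S := h2
  apply Real.sSup_le
  · rintro b ⟨x, hx, rfl⟩
    exact hinf x hx
  · positivity

end SCF
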